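/- One-point function for two commuting SLE_{8/3} paths: for fixed z ∈ ℍ, with p_{iy}(z) = (Im(1/z)/Im((iy)^{-1}))·G(σ(z,iy)), one has lim_{y→∞} p_{iy}(z) = -(4/5)·Im(z)·Im(1/z) = (4/5)sin²(arg z). -/

import Mathlib

open Real Filter Set Asymptotics MeasureTheory Complex

/-- The Gauss hypergeometric function `₂F₁(a, b; c; t)`, defined by its power series. -/
noncomputable def hyp (a b c t : ℝ) : ℝ :=
  ∑' n : ℕ, ((ascPochhammer ℝ n).eval a * (ascPochhammer ℝ n).eval b) /
    ((ascPochhammer ℝ n).eval c * (n.factorial : ℝ)) * t ^ n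

/-- `G(t) = 1 - t·₂F₁(1, 4/3; 5/3; 1-t)`. -/
noncomputable def Gfun (t : ℝ) : ℝ := 1 - t * hyp 1 (4/3) (5/3) (1 - t)

/-- `σ(z,w) = |z-w|²/|z - w̄|²`. -/
noncomputable def sigmaC (z w : ℂ) : ℝ :=
  ‖z - w‖ ^ 2 / ‖z - (starRingEnd ℂ) w‖ ^ 2

/-- `p_{iy}(z) = (Im(1/z)/Im(1/(iy)))·G(σ(z,iy))`. -/
noncomputable def pbulk (w z : ℂ) : ℝ := ((1 / z).im / (1 / w).im) * Gfun (sigmaC z w)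

noncomputable def cc (n : ℕ) : ℝ :=
  (ascPochhammer ℝ n).eval (4/3) / (ascPochhammer ℝ n).eval (5/3)

lemma cc_pos (n : ℕ) : 0 < cc n :=
  div_pos (ascPochhammer_pos n _ (by norm_num)) (ascPochhammer_pos n _ (by norm_num))

lemma hyp_eq (s : ℝ) : hyp 1 (4/3) (5/3) s = ∑' n : ℕ, cc n * s ^ n := by
  unfold hyp
  congr 1; funext n
  rw [ascPochhammer_eval_one]
  have h5 := (ascPochhammer_pos n ((5:ℝ)/3) (by norm_num)).ne'
  have hf : ((n.factorial : ℝ)) ≠ 0 := Nat.cast_ne_zero.2 n.factorial_ne_zero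
  rw [cc]
  field_simp

lemma poch_mono (n : ℕ) :
    (ascPochhammer ℝ n).eval (4/3) ≤ (ascPochhammer ℝ n).eval (5/3) := by
  induction n with
  | zero => simp
  | succ n ih =>
    rw [ascPochhammer_succ_eval, ascPochhammer_succ_eval]
    have h1 := ascPochhammer_pos n ((4:ℝ)/3) (by norm_num)
    have : (0:ℝ) ≤ (4/3 : ℝ) + n := by positivity
    nlinarith [ascPochhammer_pos n ((5:ℝ)/3) (by norm_num)]

lemma cc_le_one (n : ℕ) : cc n ≤ 1 := by
  rw [cc, div_le_one (ascPochhammer_pos n _ (by norm_num))]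
  exact poch_mono n
lemma cc_zero : cc 0 = 1 := by simp [cc]
lemma cc_one : cc 1 = 4/5 := by norm_num [cc]

lemma summable_cc {s : ℝ} (h0 : 0 ≤ s) (h1 : s < 1) :
    Summable (fun n : ℕ => cc n * s ^ n) := by
  refine Summable.of_nonneg_of_le (fun n => mul_nonneg (cc_pos n).le (pow_nonneg h0 n))
    (fun n => ?_) (summable_geometric_of_lt_one h0 h1)
  have := cc_le_one n
  have : (0:ℝ) ≤ s ^ n := by positivity
  nlinarith [cc_pos n]

lemma hyp_bound {s : ℝ} (h0 : 0 ≤ s) (h1 : s ≤ 1/2) :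
    |hyp 1 (4/3) (5/3) s - 1 - (4/5) * s| ≤ 2 * s ^ 2 := by
  have h1' : s < 1 := by linarith
  have hsum := summable_cc h0 h1'
  have hsum1 : Summable (fun n : ℕ => cc (n+1) * s ^ (n+1)) := by
    exact_mod_cast (summable_nat_add_iff 1).2 hsum
  have hsum2 : Summable (fun n : ℕ => cc (n+2) * s ^ (n+2)) := by
    exact_mod_cast (summable_nat_add_iff 2).2 hsum
  have split : hyp 1 (4/3) (5/3) s
      = 1 + (4/5) * s + ∑' n : ℕ, cc (n+2) * s ^ (n+2) := by
    rw [hyp_eq, Summable.tsum_eq_zero_add hsum, Summable.tsum_eq_zero_add hsum1, cc_zero, cc_one]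
    simp only [show ∀ b:ℕ, b+1+1 = b+2 from fun b => rfl]; ring
  rw [split]
  have key : ∑' n : ℕ, cc (n+2) * s ^ (n+2) ≤ 2 * s ^ 2 := by
    have hle : ∑' n : ℕ, cc (n+2) * s ^ (n+2) ≤ ∑' n : ℕ, s ^ 2 * s ^ n := by
      refine Summable.tsum_le_tsum (fun n => ?_) hsum2 ?_
      · have h := cc_le_one (n+2)
        have hp : (0:ℝ) ≤ s ^ (n+2) := by positivity
        calc cc (n+2) * s ^ (n+2) ≤ 1 * s ^ (n+2) := by nlinarith
          _ = s ^ 2 * s ^ n := by ring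
      · exact (summable_geometric_of_lt_one h0 h1').mul_left _
    rw [tsum_mul_left, tsum_geometric_of_lt_one h0 h1'] at hle
    have : (1 - s)⁻¹ ≤ 2 := by
      rw [inv_le_comm₀ (by linarith) (by norm_num)]; linarith
    nlinarith [sq_nonneg s]
  have pos : 0 ≤ ∑' n : ℕ, cc (n+2) * s ^ (n+2) :=
    tsum_nonneg (fun n => mul_nonneg (cc_pos (n+2)).le (pow_nonneg h0 _))
  rw [abs_le]; constructor <;> nlinarith

lemma Gfun_bound {s : ℝ} (h0 : 0 ≤ s) (h1 : s ≤ 1/2) :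
    |Gfun (1 - s) - s/5| ≤ 3 * s ^ 2 := by
  have hE := hyp_bound h0 h1
  obtain ⟨F, hF⟩ : ∃ F, hyp 1 (4/3) (5/3) s = F := ⟨_, rfl⟩
  rw [hF] at hE
  have hG : Gfun (1 - s) = 1 - (1-s) * F := by rw [Gfun]; rw [show 1-(1-s) = s by ring, hF]
  obtain ⟨P, hP⟩ : ∃ P, (1-s) * (F - 1 - 4/5*s) = P := ⟨_, rfl⟩
  have key : Gfun (1 - s) - s/5 = 4/5*s^2 - P := by rw [hG, ← hP]; ring
  have habs : |1 - s| ≤ 1 := by rw [abs_le]; constructor <;> linarith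
  have h5 : |P| ≤ 2*s^2 := by
    rw [← hP, abs_mul]
    calc |1-s| * |F - 1 - 4/5*s| ≤ 1 * (2*s^2) :=
          mul_le_mul habs hE (abs_nonneg _) one_pos.le
      _ = 2*s^2 := one_mul _
  rw [abs_le] at h5 ⊢
  constructor <;> [linarith [sq_nonneg s]; linarith [sq_nonneg s]]

lemma sigma_eval (z : ℂ) (y : ℝ) :
    sigmaC z (Complex.I * y) =
      (z.re^2 + (z.im - y)^2) / (z.re^2 + (z.im + y)^2) := by
  simp [sigmaC, ← Complex.normSq_eq_norm_sq, Complex.normSq_apply, Complex.sub_re,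
    Complex.sub_im, Complex.mul_re, Complex.mul_im]
  ring_nf

lemma inv_Iy (y : ℝ) (hy : y ≠ 0) : (1 / (Complex.I * y)).im = -1/y := by
  rw [one_div, mul_inv, Complex.mul_im]
  simp [Complex.inv_im, Complex.inv_re, Complex.normSq_apply]
  field_simp

/-- for fixed `z ∈ ℍ`,
`lim_{y→∞} p_{iy}(z) = -(4/5)·Im(z)·Im(1/z) = (4/5)·sin²(arg z)`. -/
theorem stmt19 (z : ℂ) (hz : 0 < z.im) :
    Tendsto (fun y : ℝ => pbulk (Complex.I * y) z) atTop
      (nhds (-(4/5) * z.im * (1 / z).im)) ∧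
    -(4/5) * z.im * (1 / z).im = (4/5) * Real.sin z.arg ^ 2 := by
  constructor
  · set a := z.re with ha
    set b := z.im with hb
    set c := (1/z).im with hc
    set s : ℝ → ℝ := fun y => 4*b*y/(a^2+(b+y)^2) with hs
    set M : ℝ → ℝ := fun y => -c * (y * s y) / 5 with hM
    have hden : ∀ y : ℝ, 0 < y → 0 < a^2 + (b+y)^2 := by
      intro y hy
      have h1 : 0 < (b+y)^2 := pow_pos (by linarith) 2
      nlinarith [sq_nonneg a]
    have hinv : Tendsto (fun y:ℝ => y⁻¹) atTop (nhds 0) := tendsto_inv_atTop_zero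
    have hu : Tendsto (fun y:ℝ => (a^2+b^2)*(y⁻¹*y⁻¹) + 2*b*y⁻¹ + 1) atTop (nhds 1) := by
      have := (((hinv.mul hinv).const_mul (a^2+b^2)).add (hinv.const_mul (2*b))).add
        (tendsto_const_nhds (x := (1:ℝ)))
      simpa using this
    have L2 : Tendsto (fun y => y * s y) atTop (nhds (4*b)) := by
      have h := (tendsto_const_nhds (x := 4*b)).div hu one_ne_zero
      rw [div_one] at h
      refine h.congr' ?_
      filter_upwards [eventually_gt_atTop (0:ℝ)] with y hy
      have hd := (hden y hy).ne'
      rw [hs]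
      simp only [Pi.div_apply]
      field_simp
      ring
    have L1 : Tendsto s atTop (nhds 0) := by
      have h := hinv.mul L2
      rw [zero_mul] at h
      refine h.congr' ?_
      filter_upwards [eventually_gt_atTop (0:ℝ)] with y hy
      have hd := (hden y hy).ne'
      rw [hs]
      field_simp
    have hpb : ∀ y : ℝ, 0 < y →
        pbulk (Complex.I * y) z = (-y * c) * Gfun (1 - s y) := by
      intro y hy
      have hd := (hden y hy).ne'
      rw [pbulk, inv_Iy y hy.ne', sigma_eval]
      have h1 : (a^2 + (b - y)^2) / (a^2 + (b+y)^2) = 1 - s y := by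
        rw [hs]; field_simp; ring
      rw [← ha, ← hb, h1, ← hc]
      have h2 : c / (-1/y) = -y * c := by field_simp
      rw [h2]
    have TM : Tendsto M atTop (nhds (-(4/5) * b * c)) := by
      have h := (L2.const_mul (-c)).div_const 5
      rw [show -c * (4*b) / 5 = -(4/5) * b * c from by ring] at h
      exact h
    have Terr : Tendsto (fun y : ℝ => pbulk (Complex.I * y) z - M y) atTop (nhds 0) := by
      have hbound : Tendsto (fun y => 3*|c| * (s y * (y * s y))) atTop (nhds 0) := by
        have := (L1.mul L2).const_mul (3*|c|)
        simpa using this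
      refine squeeze_zero_norm' ?_ hbound
      filter_upwards [eventually_gt_atTop (0:ℝ),
        L1.eventually (eventually_lt_nhds (by norm_num : (0:ℝ) < 1/2))] with y hy h12
      have hs0 : 0 ≤ s y := by
        rw [hs]
        have := (hden y hy)
        positivity
      have hG := Gfun_bound hs0 h12.le
      have h6 : pbulk (Complex.I * y) z - M y = (-y * c) * (Gfun (1 - s y) - s y/5) := by
        rw [hpb y hy, hM]; ring
      rw [h6]
      rw [Real.norm_eq_abs, abs_mul, abs_mul, abs_neg, abs_of_pos hy]
      calc y * |c| * |Gfun (1 - s y) - s y/5| ≤ y * |c| * (3 * (s y)^2) := by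
            apply mul_le_mul_of_nonneg_left hG (by positivity)
        _ = 3*|c| * (s y * (y * s y)) := by ring
    have := TM.add Terr
    rw [add_zero] at this
    exact this.congr (fun y => by ring)
  · have hz0 : z ≠ 0 := by
      intro h; rw [h] at hz; simp at hz
    have hns : Complex.normSq z ≠ 0 := fun h => hz0 (Complex.normSq_eq_zero.mp h)
    rw [one_div, Complex.inv_im, Complex.sin_arg, div_pow, Complex.sq_norm]
    field_simp
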